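/- Let n ≥ 3 and let G be an n-ary group with multiplication μₙ. For g ∈ G define the querpower recursively by ḡ⟨⟨0⟩⟩ = g and ḡ⟨⟨k⟩⟩ = the querelement of ḡ⟨⟨k−1⟩⟩, and define the negative polyadic power g⟨−ℓ⟩ as the unique solution of the equation (ℓ-fold iterated μₙ-product of ℓ(n−1) copies of g followed by g⟨−ℓ⟩) = g. Then for every k ≥ 0 the querpower coincides with a deformed negative polyadic power: ḡ⟨⟨k⟩⟩ = g⟨−[[k]]_{2−n}⟩, where [[k]]_{2−n} = ((2−n)^k − 1)/((2−n) − 1). -/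

import Mathlib

/-- Total associativity of an `n`-ary operation `μ` given on lists: the composed
product of `2n-1` elements with one inner multiplication does not depend on the
position of the inner multiplication. -/
def TotAssoc {G : Type*} (n : ℕ) (μ : List G → G) : Prop :=
  ∀ p₁ c₁ s₁ p₂ c₂ s₂ : List G,
    c₁.length = n → c₂.length = n →
    p₁.length + s₁.length = n - 1 → p₂.length + s₂.length = n - 1 →
    p₁ ++ c₁ ++ s₁ = p₂ ++ c₂ ++ s₂ →
    μ (p₁ ++ μ c₁ :: s₁) = μ (p₂ ++ μ c₂ :: s₂)

/-- Unique solvability of an `n`-ary operation in each place `i = 0,…,n-1`. -/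
def UniqSolv {G : Type*} (n : ℕ) (μ : List G → G) : Prop :=
  ∀ (u : List G) (g : G), u.length = n - 1 →
    ∀ i ≤ n - 1, ∃! h : G, μ (u.take i ++ h :: u.drop i) = g

/-- The `ℓ`-fold iterated (left-nested) `n`-ary product of a list of
`ℓ(n-1)+1` elements; for `ℓ = 0` it returns the single element of the list. -/
def iterMu {G : Type*} (μ : List G → G) (n : ℕ) : ℕ → List G → G
  | 0, [] => μ []
  | 0, a :: _ => a
  | ℓ + 1, l => iterMu μ n ℓ (μ (l.take n) :: l.drop n)

section Aux
variable {G : Type*} {n : ℕ} {μ : List G → G}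

theorem iterMu_succ (ℓ : ℕ) (l : List G) :
    iterMu μ n (ℓ+1) l = iterMu μ n ℓ (μ (l.take n) :: l.drop n) := rfl

theorem iterMu_one (l : List G) (hl : l.length = n) : iterMu μ n 1 l = μ l := by
  rw [iterMu_succ, List.take_of_length_le hl.le, List.drop_of_length_le hl.le]
  rfl

theorem mu_step (hn : 3 ≤ n) (hassoc : TotAssoc n μ) :
    ∀ (m : ℕ) (u w v : List G), w.length = n → u.length + v.length = m*(n-1) →
    iterMu μ n (m+1) (u ++ w ++ v) = iterMu μ n m (u ++ μ w :: v) := by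
  intro m
  induction m with
  | zero =>
    intro u w v hw huv
    have hu : u = [] := List.eq_nil_of_length_eq_zero (by omega)
    have hv : v = [] := List.eq_nil_of_length_eq_zero (by omega)
    subst hu; subst hv
    simp only [List.nil_append, List.append_nil]
    rw [iterMu_one w hw]; rfl
  | succ m ih =>
    intro u w v hw huv
    have hmul : (m+1)*(n-1) = m*(n-1) + (n-1) := Nat.succ_mul m (n-1)
    by_cases hcase : n ≤ u.length
    · -- split u = u₁ ++ u₂ with u₁.length = n
      obtain ⟨u₁, u₂, rfl, hu₁⟩ : ∃ u₁ u₂, u = u₁ ++ u₂ ∧ u₁.length = n :=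
        ⟨u.take n, u.drop n, (List.take_append_drop n u).symm, by rw [List.length_take]; omega⟩
      simp only [List.length_append] at huv hcase
      have step2 : iterMu μ n (m+1) (u₁ ++ u₂ ++ μ w :: v)
          = iterMu μ n m (μ u₁ :: (u₂ ++ μ w :: v)) := by
        rw [iterMu_succ m, List.append_assoc u₁, List.take_left' hu₁, List.drop_left' hu₁]
      rw [step2, iterMu_succ (m+1), List.append_assoc u₁, List.append_assoc u₁,
        List.take_left' hu₁, List.drop_left' hu₁]
      have := ih (μ u₁ :: u₂) w v hw (by simp only [List.length_cons]; omega)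
      simpa using this
    · push_neg at hcase
      obtain ⟨w₁, w₂, rfl, hw₁⟩ : ∃ w₁ w₂, w = w₁ ++ w₂ ∧ w₁.length = n - u.length :=
        ⟨w.take (n - u.length), w.drop (n - u.length), (List.take_append_drop _ w).symm,
          by rw [List.length_take]; omega⟩
      simp only [List.length_append] at hw
      have hw₂ : w₂.length = u.length := by omega
      have huw₁ : (u ++ w₁).length = n := by rw [List.length_append, hw₁]; omega
      obtain ⟨v₁, v₂, rfl, hv₁⟩ : ∃ v₁ v₂, v = v₁ ++ v₂ ∧ v₁.length = n - 1 - u.length :=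
        ⟨v.take (n - 1 - u.length), v.drop (n - 1 - u.length), (List.take_append_drop _ v).symm,
          by rw [List.length_take]; omega⟩
      simp only [List.length_append] at huv
      -- LHS: two unfoldings
      have lhs1 : u ++ (w₁ ++ w₂) ++ (v₁ ++ v₂) = (u ++ w₁) ++ (w₂ ++ (v₁ ++ v₂)) := by
        simp [List.append_assoc]
      rw [lhs1, iterMu_succ (m+1), List.take_left' huw₁, List.drop_left' huw₁]
      have hlen2 : (μ (u ++ w₁) :: (w₂ ++ v₁)).length = n := by
        simp only [List.length_cons, List.length_append]; omega
      have lhs2 : (μ (u ++ w₁) :: (w₂ ++ (v₁ ++ v₂))) =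
          (μ (u ++ w₁) :: (w₂ ++ v₁)) ++ v₂ := by simp [List.append_assoc]
      rw [lhs2, iterMu_succ m, List.take_left' hlen2, List.drop_left' hlen2]
      -- RHS: one unfolding
      have hlen3 : (u ++ μ (w₁ ++ w₂) :: v₁).length = n := by
        simp only [List.length_append, List.length_cons]; omega
      have rhs1 : u ++ μ (w₁ ++ w₂) :: (v₁ ++ v₂) = (u ++ μ (w₁ ++ w₂) :: v₁) ++ v₂ := by
        simp
      rw [rhs1, iterMu_succ m, List.take_left' hlen3, List.drop_left' hlen3]
      congr 2
      refine hassoc [] (u ++ w₁) (w₂ ++ v₁) u (w₁ ++ w₂) v₁ huw₁ (by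
          rw [List.length_append]; omega) ?_ ?_ ?_
      · simp only [List.length_nil, List.length_append]; omega
      · omega
      · simp [List.append_assoc]

theorem mu_flat (hn : 3 ≤ n) (hassoc : TotAssoc n μ) :
    ∀ (b a : ℕ) (u w v : List G), w.length = b*(n-1)+1 → u.length + v.length = a*(n-1) →
    iterMu μ n (a+b) (u ++ w ++ v) = iterMu μ n a (u ++ iterMu μ n b w :: v) := by
  intro b
  induction b with
  | zero =>
    intro a u w v hw huv
    obtain ⟨x, rfl⟩ : ∃ x, w = [x] := List.length_eq_one_iff.mp (by simpa using hw)
    rw [List.append_assoc]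
    rfl
  | succ b ih =>
    intro a u w v hw huv
    have hmul : (b+1)*(n-1) = b*(n-1) + (n-1) := Nat.succ_mul b (n-1)
    obtain ⟨w₁, w₂, rfl, hw₁⟩ : ∃ w₁ w₂, w = w₁ ++ w₂ ∧ w₁.length = n :=
      ⟨w.take n, w.drop n, (List.take_append_drop n w).symm, by
        rw [List.length_take]; omega⟩
    simp only [List.length_append] at hw
    have hw₂ : w₂.length = b*(n-1) := by omega
    have e1 : u ++ (w₁ ++ w₂) ++ v = u ++ w₁ ++ (w₂ ++ v) := by simp [List.append_assoc]
    have ha : a + (b+1) = (a+b)+1 := by omega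
    rw [e1, ha, mu_step hn hassoc (a+b) u w₁ (w₂ ++ v) hw₁ (by
      simp only [List.length_append]
      have : (a+b)*(n-1) = a*(n-1) + b*(n-1) := Nat.add_mul a b (n-1)
      omega)]
    have e2 : u ++ μ w₁ :: (w₂ ++ v) = u ++ (μ w₁ :: w₂) ++ v := by simp
    rw [e2, ih a u (μ w₁ :: w₂) v (by simp only [List.length_cons]; omega) huv]
    congr 2
    rw [iterMu_succ, List.take_left' hw₁, List.drop_left' hw₁]

end Aux

section Aux2
variable {G : Type*} {n : ℕ} {μ : List G → G}

theorem solve_last_unique (hn : 3 ≤ n) (hsolv : UniqSolv n μ) (u : List G)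
    (hu : u.length = n - 1) {g x y : G}
    (hx : μ (u ++ [x]) = g) (hy : μ (u ++ [y]) = g) : x = y := by
  obtain ⟨h, -, huniq⟩ := hsolv u g hu (n-1) le_rfl
  have ex : ∀ z : G, u.take (n-1) ++ z :: u.drop (n-1) = u ++ [z] := by
    intro z
    rw [List.take_of_length_le hu.le, List.drop_of_length_le hu.le]
  rw [(huniq x (by simp only [ex]; exact hx)), (huniq y (by simp only [ex]; exact hy))]

theorem cancel_last (hn : 3 ≤ n) (hassoc : TotAssoc n μ) (hsolv : UniqSolv n μ)
    (m : ℕ) (u : List G) (x y : G) (hu : u.length = m*(n-1))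
    (h : iterMu μ n m (u ++ [x]) = iterMu μ n m (u ++ [y])) : x = y := by
  match m with
  | 0 =>
    have hu0 : u = [] := List.eq_nil_of_length_eq_zero (by simpa using hu)
    subst hu0
    simpa [iterMu] using h
  | m+1 =>
    have hmul : (m+1)*(n-1) = m*(n-1) + (n-1) := Nat.succ_mul m (n-1)
    obtain ⟨w, v, rfl, hwl⟩ : ∃ w v, u = w ++ v ∧ w.length = m*(n-1)+1 :=
      ⟨u.take (m*(n-1)+1), u.drop (m*(n-1)+1), (List.take_append_drop _ u).symm,
        by rw [List.length_take]; omega⟩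
    simp only [List.length_append] at hu
    have hv : v.length = n - 2 := by omega
    have key : ∀ z : G, iterMu μ n (m+1) (w ++ (v ++ [z]))
        = μ (iterMu μ n m w :: (v ++ [z])) := by
      intro z
      have e1 : w ++ (v ++ [z]) = ([] : List G) ++ w ++ (v ++ [z]) := by simp
      have e2 : (m+1) = 1 + m := by omega
      rw [e1, e2, mu_flat hn hassoc m 1 [] w (v ++ [z]) hwl
        (by simp only [List.length_nil, List.length_append, List.length_cons]; omega)]
      exact iterMu_one _ (by
        simp only [List.length_cons, List.length_append, List.length_nil,
          List.length_cons]; omega)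
    rw [List.append_assoc w v [x], List.append_assoc w v [y], key x, key y] at h
    have e3 : ∀ z : G, iterMu μ n m w :: (v ++ [z])
        = (iterMu μ n m w :: v) ++ [z] := by intro z; simp
    rw [e3 x, e3 y] at h
    exact solve_last_unique hn hsolv _ (by simp only [List.length_cons, List.length_append]; omega) h rfl

end Aux2

section Aux3
variable {G : Type*} {n : ℕ} {μ : List G → G}

theorem e_sided (hn : 3 ≤ n) (hassoc : TotAssoc n μ) (hsolv : UniqSolv n μ)
    (g h : G) (a : ℕ)
    (hE : iterMu μ n a (List.replicate (a*(n-1)) g ++ [h]) = g)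
    (j : ℕ) (hj : j ≤ a*(n-1)) :
    iterMu μ n a (List.replicate j g ++ h :: List.replicate (a*(n-1) - j) g) = g := by
  have hb : (List.replicate j g ++ h :: List.replicate (a*(n-1) - j) g).length = a*(n-1)+1 := by
    simp only [List.length_append, List.length_replicate, List.length_cons]; omega
  have way2 := mu_flat hn hassoc a a (List.replicate (a*(n-1)) g)
      (List.replicate j g ++ h :: List.replicate (a*(n-1)-j) g) [] hb
      (by simp only [List.length_replicate, List.length_nil]; omega)
  have way1 := mu_flat hn hassoc a a (List.replicate j g)
      (List.replicate (a*(n-1)) g ++ [h]) (List.replicate (a*(n-1)-j) g)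
      (by simp only [List.length_append, List.length_replicate, List.length_cons,
        List.length_nil])
      (by simp only [List.length_replicate]; omega)
  rw [hE] at way1
  have eqlist : List.replicate (a*(n-1)) g ++
        (List.replicate j g ++ h :: List.replicate (a*(n-1)-j) g) ++ ([] : List G)
      = List.replicate j g ++ (List.replicate (a*(n-1)) g ++ [h])
        ++ List.replicate (a*(n-1)-j) g := by
    simp only [List.append_nil, List.append_assoc]
    rw [← List.append_assoc, ← List.append_assoc, ← List.replicate_add,
      ← List.replicate_add, Nat.add_comm]
    simp
  rw [eqlist, way1] at way2
  have eqlist2 : List.replicate j g ++ g :: List.replicate (a*(n-1)-j) g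
      = List.replicate (a*(n-1)) g ++ [g] := by
    have : List.replicate j g ++ g :: List.replicate (a*(n-1)-j) g
        = List.replicate (j + (1 + (a*(n-1)-j))) g := by
      simp [List.replicate_add, List.replicate_succ]
    rw [this, show j + (1 + (a*(n-1)-j)) = a*(n-1) + 1 by omega, List.replicate_succ']
  rw [eqlist2] at way2
  exact cancel_last hn hassoc hsolv a _ _ _ (by simp) way2.symm

theorem k_one (hn : 3 ≤ n) (hassoc : TotAssoc n μ) (hsolv : UniqSolv n μ)
    (g h : G) (a : ℕ) (ha : 1 ≤ a)
    (hE : iterMu μ n a (List.replicate (a*(n-1)) g ++ [h]) = g) :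
    ∀ t, 1 ≤ t →
      iterMu μ n (t*a) (g :: (List.replicate t h
        ++ List.replicate (t*(a*(n-1) - 1)) g)) = g := by
  have hX : 2 ≤ a*(n-1) := by
    have := Nat.mul_le_mul ha (show 2 ≤ n-1 by omega); omega
  intro t ht
  induction t with
  | zero => omega
  | succ t ih =>
    rcases Nat.eq_or_lt_of_le ht with h1 | h1
    · -- t + 1 = 1
      have ht0 : t = 0 := by omega
      subst ht0
      have := e_sided hn hassoc hsolv g h a hE 1 (by omega)
      simpa [List.replicate_succ] using this
    · have ht' : 1 ≤ t := by omega
      have ih' := ih ht'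
      -- inner block value
      have inner : iterMu μ n a (h :: List.replicate (a*(n-1)) g) = g := by
        simpa using e_sided hn hassoc hsolv g h a hE 0 (by omega)
      have hvlen : t*(a*(n-1)-1) ≥ 1 := by
        have := Nat.mul_le_mul ht' (show 1 ≤ a*(n-1)-1 by omega); omega
      -- list rearrangement
      have eqlist : g :: (List.replicate (t+1) h ++ List.replicate ((t+1)*(a*(n-1)-1)) g)
          = (g :: List.replicate t h) ++ (h :: List.replicate (a*(n-1)) g)
            ++ List.replicate (t*(a*(n-1)-1) - 1) g := by
        have e1 : (t+1)*(a*(n-1)-1) = a*(n-1) + (t*(a*(n-1)-1) - 1) := by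
          have e2 : (t+1)*(a*(n-1)-1) = t*(a*(n-1)-1) + (a*(n-1)-1) :=
            Nat.succ_mul t _
          omega
        rw [e1, List.replicate_succ' (n := t) (a := h), List.replicate_add]
        simp [List.append_assoc]
      rw [eqlist]
      have hflat := mu_flat hn hassoc a (t*a) (g :: List.replicate t h)
        (h :: List.replicate (a*(n-1)) g) (List.replicate (t*(a*(n-1)-1) - 1) g)
        (by simp only [List.length_cons, List.length_replicate])
        (by simp only [List.length_cons, List.length_replicate]
            have e3 : (t*a)*(n-1) = t*(a*(n-1)) := by rw [Nat.mul_assoc]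
            have e4 : t*(a*(n-1)) = t*(a*(n-1)-1) + t := by
              conv_lhs => rw [show a*(n-1) = (a*(n-1)-1)+1 by omega]
              rw [Nat.mul_succ]
            omega)
      rw [show (t+1)*a = t*a + a from Nat.succ_mul t a, hflat, inner]
      have eqlist2 : (g :: List.replicate t h) ++ g ::
            List.replicate (t*(a*(n-1)-1) - 1) g
          = g :: (List.replicate t h ++ List.replicate (t*(a*(n-1)-1)) g) := by
        rw [show t*(a*(n-1)-1) = (t*(a*(n-1)-1) - 1) + 1 by omega]
        simp [List.replicate_succ, List.append_assoc]
      rw [eqlist2]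
      exact ih'

end Aux3

section Aux4
variable {G : Type*} {n : ℕ} {μ : List G → G}

/-- Even → odd step: if `h` is the positive power `g⟨a⟩`, then any solution `x`
of `μ(h^{n-1}, x) = h` satisfies the defining equation of `g⟨-(1+(n-2)a)⟩`. -/
theorem stepA (hn : 3 ≤ n) (hassoc : TotAssoc n μ) (hsolv : UniqSolv n μ)
    (g h x : G) (a : ℕ)
    (hP : iterMu μ n a (List.replicate (a*(n-1)+1) g) = h)
    (hx : μ (List.replicate (n-1) h ++ [x]) = h) :
    iterMu μ n (1+(n-2)*a) (List.replicate ((1+(n-2)*a)*(n-1)) g ++ [x]) = g := by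
  -- the expansion loop
  have loop : ∀ t, t ≤ n-1 →
      iterMu μ n (1+t*a) (List.replicate (t*(a*(n-1)+1)) g
        ++ (List.replicate (n-1-t) h ++ [x])) = h := by
    intro t
    induction t with
    | zero =>
      intro _htn
      simp only [Nat.zero_mul, List.replicate_zero, List.nil_append, Nat.sub_zero]
      rw [iterMu_one _ (by simp only [List.length_append, List.length_replicate,
        List.length_cons, List.length_nil]; omega)]
      exact hx
    | succ t ih =>
      intro htn
      have ih' := ih (by omega)
      have hflat := mu_flat hn hassoc a (1+t*a) (List.replicate (t*(a*(n-1)+1)) g)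
        (List.replicate (a*(n-1)+1) g)
        (List.replicate (n-1-(t+1)) h ++ [x])
        (by simp only [List.length_replicate])
        (by simp only [List.length_replicate, List.length_append, List.length_cons,
              List.length_nil]
            have e1 : (1+t*a)*(n-1) = (n-1) + (t*a)*(n-1) := by
              rw [Nat.add_mul, Nat.one_mul]
            have e2 : (t*a)*(n-1) = t*(a*(n-1)) := Nat.mul_assoc t a (n-1)
            have e3 : t*(a*(n-1)+1) = t*(a*(n-1)) + t := Nat.mul_succ t _
            omega)
      rw [hP] at hflat
      have eqlist : List.replicate ((t+1)*(a*(n-1)+1)) g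
            ++ (List.replicate (n-1-(t+1)) h ++ [x])
          = List.replicate (t*(a*(n-1)+1)) g ++ List.replicate (a*(n-1)+1) g
            ++ (List.replicate (n-1-(t+1)) h ++ [x]) := by
        rw [← List.replicate_add, ← Nat.succ_mul]
      have eqlist2 : List.replicate (t*(a*(n-1)+1)) g
            ++ h :: (List.replicate (n-1-(t+1)) h ++ [x])
          = List.replicate (t*(a*(n-1)+1)) g ++ (List.replicate (n-1-t) h ++ [x]) := by
        rw [show n-1-t = (n-1-(t+1))+1 by omega, List.replicate_succ]
        simp
      rw [eqlist, show 1+(t+1)*a = 1+t*a+a by rw [Nat.succ_mul]; omega, hflat,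
        eqlist2]
      exact ih'
  have final := loop (n-1) le_rfl
  simp only [Nat.sub_self, List.replicate_zero, List.nil_append] at final
  rw [hP.symm] at final
  -- split the replicate block
  have e4 : (n-1)*(a*(n-1)+1) = a*(n-1) + (1+(n-2)*a)*(n-1) := by
    have e5 : (n-1)*(a*(n-1)+1) = (n-1)*(a*(n-1)) + (n-1) := Nat.mul_succ _ _
    have e6 : (1+(n-2)*a)*(n-1) = (n-1) + ((n-2)*a)*(n-1) := by
      rw [Nat.add_mul, Nat.one_mul]
    have e7 : (n-1)*(a*(n-1)) = ((n-1)*a)*(n-1) := (Nat.mul_assoc _ _ _).symm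
    have e8 : ((n-2)*a)*(n-1) = (n-2)*(a*(n-1)) := Nat.mul_assoc _ _ _
    have e9 : (n-1)*(a*(n-1)) = (n-2)*(a*(n-1)) + a*(n-1) := by
      rw [show n-1 = (n-2)+1 by omega, Nat.succ_mul]
    omega
  rw [e4, List.replicate_add] at final
  have hflat2 := mu_flat hn hassoc (1+(n-2)*a) a (List.replicate (a*(n-1)) g)
    (List.replicate ((1+(n-2)*a)*(n-1)) g ++ [x]) []
    (by simp only [List.length_append, List.length_replicate, List.length_cons,
      List.length_nil])
    (by simp only [List.length_replicate, List.length_nil]; omega)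
  rw [List.append_nil] at hflat2
  have er2 : 1+(n-1)*a = a + (1+(n-2)*a) := by
    have er : (n-1)*a = (n-2)*a + a := by
      rw [show n-1 = (n-2)+1 by omega, Nat.succ_mul]
    omega
  rw [er2, List.append_assoc, hflat2] at final
  -- cancel
  refine cancel_last hn hassoc hsolv a (List.replicate (a*(n-1)) g) _ g (by simp) ?_
  rw [final, ← List.replicate_succ']

/-- Odd → even step: if `h` satisfies the defining equation of `g⟨-a⟩` with `a ≥ 1`,
then the positive power `g⟨(n-2)a - 1⟩` solves `μ(h^{n-1}, x) = h`. -/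
theorem stepB (hn : 3 ≤ n) (hassoc : TotAssoc n μ) (hsolv : UniqSolv n μ)
    (g h : G) (a : ℕ) (ha : 1 ≤ a)
    (hE : iterMu μ n a (List.replicate (a*(n-1)) g ++ [h]) = g) :
    μ (List.replicate (n-1) h
      ++ [iterMu μ n ((n-2)*a-1) (List.replicate (((n-2)*a-1)*(n-1)+1) g)]) = h := by
  have hX : 2 ≤ a*(n-1) := by
    have := Nat.mul_le_mul ha (show 2 ≤ n-1 by omega); omega
  have hca : 1 ≤ (n-2)*a := by
    have := Nat.mul_le_mul (show 1 ≤ n-2 by omega) ha; omega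
  set D := μ (List.replicate (n-1) h
      ++ [iterMu μ n ((n-2)*a-1) (List.replicate (((n-2)*a-1)*(n-1)+1) g)]) with hD
  -- the big product S
  -- (i) S unflattened once: replace P a'' by its list
  have hflat1 := mu_flat hn hassoc ((n-2)*a-1) (a+1)
    (List.replicate (a*(n-1)) g ++ List.replicate (n-1) h)
    (List.replicate (((n-2)*a-1)*(n-1)+1) g) []
    (by simp only [List.length_replicate])
    (by simp only [List.length_append, List.length_replicate, List.length_nil]
        have e1 : (a+1)*(n-1) = a*(n-1) + (n-1) := Nat.succ_mul a _
        omega)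
  rw [List.append_nil] at hflat1
  -- (ii) collapse the inner μ into iterMu (a+1)
  have hflat2 := mu_flat hn hassoc 1 a (List.replicate (a*(n-1)) g)
    (List.replicate (n-1) h
      ++ [iterMu μ n ((n-2)*a-1) (List.replicate (((n-2)*a-1)*(n-1)+1) g)]) []
    (by simp only [List.length_append, List.length_replicate, List.length_cons,
      List.length_nil]; omega)
    (by simp only [List.length_replicate, List.length_nil]; omega)
  rw [List.append_nil] at hflat2
  rw [iterMu_one _ (by simp only [List.length_append, List.length_replicate,
    List.length_cons, List.length_nil]; omega), ← hD] at hflat2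
  -- (iii) collapse the leading block g^{a(n-1)} h to g
  have hflat3 := mu_flat hn hassoc a (1+((n-2)*a-1)) ([] : List G)
    (List.replicate (a*(n-1)) g ++ [h])
    (List.replicate (n-2) h ++ List.replicate ((((n-2)*a-1))*(n-1)+1) g)
    (by simp only [List.length_append, List.length_replicate, List.length_cons,
      List.length_nil])
    (by simp only [List.length_nil, List.length_append, List.length_replicate,
          List.length_cons]
        have e2 : (1+((n-2)*a-1))*(n-1) = n-1 + ((n-2)*a-1)*(n-1) := by
          rw [Nat.add_mul, Nat.one_mul]
        omega)
  rw [hE, List.nil_append, List.nil_append] at hflat3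
  -- (iv) K1 value
  have hk := k_one hn hassoc hsolv g h a ha hE (n-2) (by omega)
  -- arithmetic identities
  have earith : ((n-2)*a-1)*(n-1)+1 = (n-2)*(a*(n-1)-1) := by
    zify [ha, hca, hX, show 1 ≤ a*(n-1) by omega, show 2 ≤ n by omega,
      show 1 ≤ n by omega]
    push_cast
    ring
  have ecnt : (n-2)*a = 1 + ((n-2)*a - 1) := by omega
  -- chain the equalities
  -- S := iterMu (a + (1+((n-2)*a-1))) (g^{a(n-1)} ++ h^{n-1} ++ g^{a''(n-1)+1})
  -- list equality between hflat1's list and hflat3's list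
  have elist : (List.replicate (a*(n-1)) g ++ List.replicate (n-1) h)
        ++ List.replicate (((n-2)*a-1)*(n-1)+1) g
      = (List.replicate (a*(n-1)) g ++ [h])
        ++ (List.replicate (n-2) h ++ List.replicate (((n-2)*a-1)*(n-1)+1) g) := by
    rw [show n-1 = 1+(n-2) by omega, List.replicate_add]
    simp [List.append_assoc]
  have ecnt2 : a + 1 + ((n-2)*a-1) = 1 + ((n-2)*a-1) + a := by omega
  -- value of S via (iii)+(iv):
  have hSval : iterMu μ n (1 + ((n-2)*a-1) + a)
      ((List.replicate (a*(n-1)) g ++ [h])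
        ++ (List.replicate (n-2) h ++ List.replicate (((n-2)*a-1)*(n-1)+1) g)) = g := by
    rw [hflat3]
    have elist2 : g :: (List.replicate (n-2) h ++ List.replicate (((n-2)*a-1)*(n-1)+1) g)
        = g :: (List.replicate (n-2) h ++ List.replicate ((n-2)*(a*(n-1)-1)) g) := by
      rw [earith]
    calc iterMu μ n (1+((n-2)*a-1))
          ([] ++ g :: (List.replicate (n-2) h ++ List.replicate (((n-2)*a-1)*(n-1)+1) g))
        = iterMu μ n ((n-2)*a)
          (g :: (List.replicate (n-2) h ++ List.replicate ((n-2)*(a*(n-1)-1)) g)) := by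
          rw [List.nil_append, elist2, ← ecnt]
      _ = g := hk
  -- now go back up the chain
  have hS2 : iterMu μ n (a+1) ((List.replicate (a*(n-1)) g ++ List.replicate (n-1) h)
      ++ [iterMu μ n ((n-2)*a-1) (List.replicate (((n-2)*a-1)*(n-1)+1) g)]) = g := by
    rw [← hflat1, elist, ecnt2]
    exact hSval
  have hS3 : iterMu μ n a (List.replicate (a*(n-1)) g ++ [D]) = g := by
    rw [← hflat2]
    rw [List.append_assoc] at hS2
    exact hS2
  -- cancel against hE
  have := cancel_last hn hassoc hsolv a (List.replicate (a*(n-1)) g) D h (by simp)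
    (by rw [hS3, hE])
  rw [← this]

end Aux4

def Lfun (q : ℤ) : ℕ → ℤ
  | 0 => 0
  | k+1 => 1 + q * Lfun q k

theorem Lfun_spec (q : ℤ) (k : ℕ) : (q - 1) * Lfun q k = q^k - 1 := by
  induction k with
  | zero => simp [Lfun]
  | succ k ih =>
    have e : (q-1) * (1 + q * Lfun q k) = (q-1) + q*((q-1)*Lfun q k) := by ring
    rw [Lfun, e, ih]
    ring

theorem main_ind {G : Type*} {n : ℕ} {μ : List G → G} (hn : 3 ≤ n)
    (hassoc : TotAssoc n μ) (hsolv : UniqSolv n μ)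
    (bar : G → G) (hbar : ∀ g : G, μ (List.replicate (n - 1) g ++ [bar g]) = g)
    (g : G) (k : ℕ) :
    (∃ a : ℕ, Lfun (2 - (n:ℤ)) k = -(a:ℤ) ∧
      bar^[k] g = iterMu μ n a (List.replicate (a*(n-1)+1) g)) ∨
    (∃ a : ℕ, 1 ≤ a ∧ Lfun (2 - (n:ℤ)) k = (a:ℤ) ∧
      iterMu μ n a (List.replicate (a*(n-1)) g ++ [bar^[k] g]) = g) := by
  induction k with
  | zero =>
    left
    exact ⟨0, by simp [Lfun], by simp [iterMu]⟩
  | succ k ih =>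
    rcases ih with ⟨a, hL, hPh⟩ | ⟨a, ha, hL, hEh⟩
    · right
      refine ⟨1+(n-2)*a, by omega, ?_, ?_⟩
      · show 1 + (2 - (n:ℤ)) * Lfun (2 - (n:ℤ)) k = ((1+(n-2)*a : ℕ) : ℤ)
        rw [hL]
        push_cast [Nat.cast_sub (show 2 ≤ n by omega)]
        ring
      · rw [Function.iterate_succ_apply']
        exact stepA hn hassoc hsolv g _ _ a hPh.symm (hbar _)
    · left
      have hca : 1 ≤ (n-2)*a := by
        have := Nat.mul_le_mul (show 1 ≤ n-2 by omega) ha; omega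
      refine ⟨(n-2)*a-1, ?_, ?_⟩
      · show 1 + (2 - (n:ℤ)) * Lfun (2 - (n:ℤ)) k = -(((n-2)*a-1 : ℕ) : ℤ)
        rw [hL]
        push_cast [Nat.cast_sub hca, Nat.cast_sub (show 2 ≤ n by omega)]
        ring
      · rw [Function.iterate_succ_apply']
        have hD := stepB hn hassoc hsolv g _ a ha hEh
        exact solve_last_unique hn hsolv _ (by simp) (hbar _) hD


/-- On an `n`-ary group (`n ≥ 3`) with querelement map `bar`,
the `k`-th querpower `ḡ⟨⟨k⟩⟩ = bar^[k] g` coincides with the deformed negative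
polyadic power `g⟨-ℓ⟩` where `ℓ = [[k]]_{2-n} = ((2-n)^k - 1)/((2-n)-1)`: if
`ℓ = m ≥ 0` then `bar^[k] g` solves the defining equation of `g⟨-m⟩` (the
`m`-fold iterated μ-product of `m(n-1)` copies of `g` followed by it equals
`g`), and if `ℓ = -m ≤ 0` then `bar^[k] g` equals the positive polyadic power
`g⟨m⟩` (the `m`-fold iterated μ-product of `m(n-1)+1` copies of `g`). -/
theorem statement12 {G : Type*} (n : ℕ) (hn : 3 ≤ n)
    (μ : List G → G) (hassoc : TotAssoc n μ) (hsolv : UniqSolv n μ)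
    (bar : G → G)
    (hbar : ∀ g : G, μ (List.replicate (n - 1) g ++ [bar g]) = g)
    (g : G) (k : ℕ) (ℓ : ℤ)
    (hℓ : ℓ = ((2 - (n : ℤ)) ^ k - 1) / ((2 - (n : ℤ)) - 1)) :
    (∀ m : ℕ, ℓ = (m : ℤ) →
      iterMu μ n m (List.replicate (m * (n - 1)) g ++ [bar^[k] g]) = g) ∧
    (∀ m : ℕ, ℓ = -(m : ℤ) →
      bar^[k] g = iterMu μ n m (List.replicate (m * (n - 1) + 1) g)) := by
  have hLk : ℓ = Lfun (2 - (n:ℤ)) k := by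
    rw [hℓ, ← Lfun_spec, Int.mul_ediv_cancel_left _ (by
      intro hcontra
      omega)]
  rcases main_ind hn hassoc hsolv bar hbar g k with ⟨a, hL, hP⟩ | ⟨a, ha, hL, hE⟩
  · constructor
    · intro m hm
      have hma : (m:ℤ) = -(a:ℤ) := by rw [← hm, hLk, hL]
      have hm0 : m = 0 := by omega
      have ha0 : a = 0 := by omega
      subst hm0
      rw [ha0] at hP
      simpa [iterMu] using hP
    · intro m hm
      have hma : -(m:ℤ) = -(a:ℤ) := by rw [← hm, hLk, hL]
      have : m = a := by omega
      subst this
      exact hP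
  · constructor
    · intro m hm
      have hma : (m:ℤ) = (a:ℤ) := by rw [← hm, hLk, hL]
      have : m = a := by omega
      subst this
      exact hE
    · intro m hm
      have hma : -(m:ℤ) = (a:ℤ) := by rw [← hm, hLk, hL]
      exfalso
      omega
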